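/- If f : X → Y is a coarse map between metric spaces and 𝔉 is a coarse ultrafilter on X, then f_*𝔉 := {A ⊆ Y : f⁻¹(A) ∈ 𝔉} is a coarse ultrafilter on Y. -/
import Mathlib


open Set Bornology Metric

/-- `E ⊆ X × X` is an entourage if `sup_{(x,y) ∈ E} d(x,y) < ∞`. -/
def IsEnt {X : Type*} [PseudoMetricSpace X] (E : Set (X × X)) : Prop :=
  ∃ C : ℝ, ∀ p ∈ E, dist p.1 p.2 ≤ C

/-- `E[A] = {y : ∃ a ∈ A, (a,y) ∈ E}`. -/
def entImg {X : Type*} [PseudoMetricSpace X] (E : Set (X × X)) (A : Set X) : Set X :=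
  {y | ∃ a ∈ A, (a, y) ∈ E}

/-- `A` and `B` are not coarsely disjoint: some entourage `E` has `E[A] ∩ E[B]` unbounded. -/
def NotCD {X : Type*} [PseudoMetricSpace X] (A B : Set X) : Prop :=
  ∃ E : Set (X × X), IsEnt E ∧ ¬ IsBounded (entImg E A ∩ entImg E B)

/-- `A` and `B` are coarsely disjoint: every entourage `E` has `E[A] ∩ E[B]` bounded. -/
def CD {X : Type*} [PseudoMetricSpace X] (A B : Set X) : Prop :=
  ∀ E : Set (X × X), IsEnt E → IsBounded (entImg E A ∩ entImg E B)

/-- Coarsely uniform: `f × f` maps entourages to entourages. -/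
def CUnif {X Y : Type*} [PseudoMetricSpace X] [PseudoMetricSpace Y] (f : X → Y) : Prop :=
  ∀ E : Set (X × X), IsEnt E → IsEnt ((fun p : X × X => (f p.1, f p.2)) '' E)

/-- Coarsely proper: preimages of bounded sets are bounded. -/
def CProper {X Y : Type*} [PseudoMetricSpace X] [PseudoMetricSpace Y] (f : X → Y) : Prop :=
  ∀ B : Set Y, IsBounded B → IsBounded (f ⁻¹' B)

/-- A coarse map is coarsely uniform and coarsely proper. -/
def Coarse {X Y : Type*} [PseudoMetricSpace X] [PseudoMetricSpace Y] (f : X → Y) : Prop :=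
  CUnif f ∧ CProper f

/-- Coarsely injective: `(f × f)⁻¹` of any entourage is an entourage. -/
def CInj {X Y : Type*} [PseudoMetricSpace X] [PseudoMetricSpace Y] (f : X → Y) : Prop :=
  ∀ F : Set (Y × Y), IsEnt F → IsEnt ((fun p : X × X => (f p.1, f p.2)) ⁻¹' F)

/-- A coarse ultrafilter on a metric space. -/
structure CUF (X : Type*) [PseudoMetricSpace X] where
  sets : Set (Set X)
  pairClose : ∀ A ∈ sets, ∀ B ∈ sets, NotCD A B
  split : ∀ A B : Set X, A ∪ B ∈ sets → A ∈ sets ∨ B ∈ sets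
  univ_mem : Set.univ ∈ sets

/-- Pushforward system of sets of a coarse ultrafilter along a map. -/
def push {X Y : Type*} [PseudoMetricSpace X] [PseudoMetricSpace Y] (f : X → Y) (F : CUF X) :
    Set (Set Y) :=
  {A : Set Y | f ⁻¹' A ∈ F.sets}

/-- Asymptotically alike coarse ultrafilters. -/
def AAlike {X : Type*} [PseudoMetricSpace X] (F G : CUF X) : Prop :=
  ∀ A ∈ F.sets, ∀ B ∈ G.sets, NotCD A B

/-- Asymptotically alike, on raw systems of subsets. -/
def AAlikeS {X : Type*} [PseudoMetricSpace X] (S T : Set (Set X)) : Prop :=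
  ∀ A ∈ S, ∀ B ∈ T, NotCD A B

/-- the pushforward of a coarse ultrafilter along a coarse map is a
coarse ultrafilter. -/
theorem stmt3 {X Y : Type*} [MetricSpace X] [MetricSpace Y] (f : X → Y)
    (hf : Coarse f) (F : CUF X) :
    ∃ G : CUF Y, G.sets = push f F := by
  refine ⟨⟨push f F, ?_, ?_, ?_⟩, rfl⟩
  · intro A hA B hB
    obtain ⟨E, hE, hnb⟩ := F.pairClose _ hA _ hB
    refine ⟨(fun p : X × X => (f p.1, f p.2)) '' E, hf.1 E hE, ?_⟩
    intro hb
    apply hnb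
    have hsub : entImg E (f ⁻¹' A) ∩ entImg E (f ⁻¹' B) ⊆
        f ⁻¹' (entImg ((fun p : X × X => (f p.1, f p.2)) '' E) A ∩
          entImg ((fun p : X × X => (f p.1, f p.2)) '' E) B) := by
      rintro x ⟨⟨a, ha, hae⟩, ⟨b, hb', hbe⟩⟩
      exact ⟨⟨f a, ha, ⟨(a, x), hae, rfl⟩⟩, ⟨f b, hb', ⟨(b, x), hbe, rfl⟩⟩⟩
    exact (hf.2 _ hb).subset hsub
  · intro A B hAB
    exact F.split _ _ hAB
  · exact F.univ_mem
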